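/- Let p ≥ 1, let C be a real symmetric positive definite p × p matrix, and let 𝓜 denote the set of real symmetric positive definite p × p matrices Σ whose inverse Σ⁻¹ is tridiagonal. Let M be the Markov transform of C. Then M ∈ 𝓜 and M is the unique minimizer over 𝓜 of the function Σ ↦ trace(Σ⁻¹ C) + log det Σ (this objective equals, up to an additive constant depending only on C and p, twice the Kullback–Leibler divergence KL(N(0,C), N(0,Σ)) between the corresponding centered Gaussian distributions). -/

import Mathlib

/-- The regression coefficient `β_{l+1} = C_{l,l+1} / C_{l,l}` of a matrix `C`
(0-based indices), with junk value `0` when out of range. -/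
noncomputable def regressionStep {p : ℕ} (C : Matrix (Fin p) (Fin p) ℝ) (l : ℕ) : ℝ :=
  if h : l + 1 < p then
    C ⟨l, Nat.lt_of_succ_lt h⟩ ⟨l + 1, h⟩ / C ⟨l, Nat.lt_of_succ_lt h⟩ ⟨l, Nat.lt_of_succ_lt h⟩
  else 0

/-- The **Markov transform** of a matrix `C`: the symmetric matrix `M` with
`M_{j,k} = C_{j,j} ∏_{l=j}^{k−1} β_{l+1}` for `j ≤ k` (empty product `= 1`). -/
noncomputable def markovTransform {p : ℕ} (C : Matrix (Fin p) (Fin p) ℝ) :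
    Matrix (Fin p) (Fin p) ℝ :=
  Matrix.of fun j k =>
    if (j : ℕ) ≤ (k : ℕ) then C j j * ∏ l ∈ Finset.Ico (j : ℕ) (k : ℕ), regressionStep C l
    else C k k * ∏ l ∈ Finset.Ico (k : ℕ) (j : ℕ), regressionStep C l

namespace MarkovProof

open Matrix Finset

variable {p : ℕ} (C : Matrix (Fin p) (Fin p) ℝ)

/-- predecessor index -/
def pr (j : Fin p) : Fin p := ⟨(j : ℕ) - 1, lt_of_le_of_lt (Nat.sub_le _ _) j.isLt⟩

noncomputable def Bm : Matrix (Fin p) (Fin p) ℝ :=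
  Matrix.of fun i m : Fin p =>
    if i = m then 1
    else if (m : ℕ) + 1 = (i : ℕ) then -(regressionStep C (m : ℕ)) else 0

noncomputable def dEntry (j : Fin p) : ℝ :=
  if 0 < (j : ℕ) then
    C j j - regressionStep C ((j : ℕ) - 1) ^ 2 * C (pr j) (pr j)
  else C j j

lemma M_symm (j k : Fin p) : markovTransform C j k = markovTransform C k j := by
  unfold markovTransform
  simp only [Matrix.of_apply]
  rcases le_total (j : ℕ) (k : ℕ) with h | h
  · rcases h.lt_or_eq with h' | h'
    · rw [if_pos h, if_neg (not_le.2 h')]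
    · have : j = k := Fin.ext h'
      subst this; rfl
  · rcases h.lt_or_eq with h' | h'
    · rw [if_neg (not_le.2 h'), if_pos h]
    · have : k = j := Fin.ext h'
      subst this; rfl

lemma M_diag (j : Fin p) : markovTransform C j j = C j j := by
  unfold markovTransform
  simp

lemma M_step {j k : Fin p} (h : (j : ℕ) < (k : ℕ)) :
    markovTransform C j k = markovTransform C j (pr k) * regressionStep C ((k : ℕ) - 1) := by
  have hk0 : 0 < (k : ℕ) := lt_of_le_of_lt (Nat.zero_le _) h
  have hj : (j : ℕ) ≤ (k : ℕ) - 1 := Nat.le_sub_one_of_lt h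
  unfold markovTransform
  simp only [Matrix.of_apply, pr]
  rw [if_pos h.le, if_pos hj]
  have hICo : Finset.Ico (j : ℕ) (k : ℕ) = Finset.Ico (j : ℕ) (((k : ℕ) - 1) + 1) := by
    congr 1; omega
  rw [hICo, Finset.prod_Ico_succ_top hj, mul_assoc]

lemma M_step' {j k : Fin p} (h : (k : ℕ) < (j : ℕ)) :
    markovTransform C j k = regressionStep C ((j : ℕ) - 1) * markovTransform C (pr j) k := by
  rw [M_symm, M_step C h, M_symm, mul_comm]

lemma rowB (i : Fin p) (v : Fin p → ℝ) :
    ∑ m, Bm C i m * v m =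
      v i - (if h : 0 < (i : ℕ) then regressionStep C ((i : ℕ) - 1) * v (pr i) else 0) := by
  have hsplit : ∀ m : Fin p, Bm C i m * v m =
      (if i = m then v m else 0) +
      (if (m : ℕ) + 1 = (i : ℕ) then -(regressionStep C (m : ℕ) * v m) else 0) := by
    intro m
    unfold Bm
    simp only [Matrix.of_apply]
    split_ifs with h1 h2
    · exfalso; rw [h1] at h2; omega
    · ring
    · ring
    · ring
  rw [Finset.sum_congr rfl (fun m _ => hsplit m), Finset.sum_add_distrib,
    Finset.sum_ite_eq, if_pos (Finset.mem_univ i)]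
  congr 1
  by_cases hi : 0 < (i : ℕ)
  · rw [dif_pos hi]
    have hcond : ∀ m : Fin p, ((m : ℕ) + 1 = (i : ℕ)) ↔ (pr i = m) := by
      intro m
      constructor
      · intro h; apply Fin.ext; simp [pr]; omega
      · intro h; subst h; simp [pr]; omega
    calc ∑ m : Fin p, (if (m : ℕ) + 1 = (i : ℕ) then -(regressionStep C (m : ℕ) * v m) else 0)
        = ∑ m : Fin p, (if pr i = m then -(regressionStep C (m : ℕ) * v m) else 0) := by
          refine Finset.sum_congr rfl fun m _ => ?_
          rw [if_congr (hcond m) rfl rfl]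
      _ = -(regressionStep C ((pr i : Fin p) : ℕ) * v (pr i)) := by
          rw [Finset.sum_ite_eq, if_pos (Finset.mem_univ _)]
      _ = -(regressionStep C ((i : ℕ) - 1) * v (pr i)) := by simp [pr]
  · rw [dif_neg hi]
    rw [neg_zero]
    refine Finset.sum_eq_zero fun m _ => ?_
    rw [if_neg]; omega

noncomputable def flatF (j k : Fin p) : ℝ :=
  markovTransform C j k
  - (if 0 < (j : ℕ) then regressionStep C ((j : ℕ) - 1) * markovTransform C (pr j) k else 0)
  - (if 0 < (k : ℕ) then regressionStep C ((k : ℕ) - 1) * markovTransform C j (pr k) else 0)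
  + (if 0 < (j : ℕ) ∧ 0 < (k : ℕ) then
      regressionStep C ((j : ℕ) - 1) * regressionStep C ((k : ℕ) - 1) *
        markovTransform C (pr j) (pr k) else 0)

lemma BM_apply (j n : Fin p) :
    (Bm C * markovTransform C) j n = markovTransform C j n -
      (if h : 0 < (j : ℕ) then
        regressionStep C ((j : ℕ) - 1) * markovTransform C (pr j) n else 0) := by
  rw [Matrix.mul_apply]
  exact rowB C j _

lemma BMB_eq_flat (j k : Fin p) :
    (Bm C * markovTransform C * (Bm C)ᵀ) j k = flatF C j k := by
  have step1 : (Bm C * markovTransform C * (Bm C)ᵀ) j k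
      = ∑ m, Bm C k m * (Bm C * markovTransform C) j m := by
    rw [Matrix.mul_apply]
    exact Finset.sum_congr rfl fun m _ => by rw [Matrix.transpose_apply, mul_comm]
  rw [step1, rowB C k (fun m => (Bm C * markovTransform C) j m),
    BM_apply, BM_apply]
  unfold flatF
  by_cases hj : 0 < (j : ℕ) <;> by_cases hk : 0 < (k : ℕ) <;>
    simp only [hj, hk, dif_pos, dif_neg, if_pos, if_neg, not_false_iff, true_and,
      and_true, false_and, and_false, if_true, if_false, not_lt_zero'] <;> ring

lemma BMB_diag :
    Bm C * markovTransform C * (Bm C)ᵀ = Matrix.diagonal (dEntry C) := by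
  ext j k
  rw [BMB_eq_flat, Matrix.diagonal_apply]
  rcases lt_trichotomy ((j : ℕ)) ((k : ℕ)) with h | h | h
  · -- j < k : zero
    rw [if_neg (fun e => by rw [e] at h; omega)]
    have hk0 : 0 < (k : ℕ) := lt_of_le_of_lt (Nat.zero_le _) h
    have e1 : markovTransform C j k = markovTransform C j (pr k) * regressionStep C ((k:ℕ)-1) :=
      M_step C h
    unfold flatF
    by_cases hj : 0 < (j : ℕ)
    · have hjk : ((pr j : Fin p) : ℕ) < (k : ℕ) := by simp [pr]; omega
      have e2 : markovTransform C (pr j) k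
          = markovTransform C (pr j) (pr k) * regressionStep C ((k:ℕ)-1) := M_step C hjk
      rw [e1, e2]
      simp only [hj, hk0, if_pos, true_and]
      ring
    · rw [e1]
      simp only [hj, hk0, if_neg, if_pos, not_false_iff, false_and, if_false]
      ring
  · -- j = k : diagonal
    have : j = k := Fin.ext h
    subst this
    rw [if_pos rfl]
    unfold flatF dEntry
    by_cases hj : 0 < (j : ℕ)
    · have hlt : ((pr j : Fin p) : ℕ) < (j : ℕ) := by simp [pr]; omega
      have e1 : markovTransform C (pr j) j
          = markovTransform C (pr j) (pr j) * regressionStep C ((j:ℕ)-1) := M_step C hlt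
      have e2 : markovTransform C j (pr j)
          = regressionStep C ((j:ℕ)-1) * markovTransform C (pr j) (pr j) := M_step' C hlt
      rw [e1, e2, M_diag, M_diag]
      simp only [hj, if_pos, true_and, and_self]
      ring
    · simp only [hj, if_neg, not_false_iff, false_and, if_false, M_diag]
      ring
  · -- k < j : zero
    rw [if_neg (fun e => by rw [e] at h; omega)]
    have hj0 : 0 < (j : ℕ) := lt_of_le_of_lt (Nat.zero_le _) h
    have e1 : markovTransform C j k = regressionStep C ((j:ℕ)-1) * markovTransform C (pr j) k :=
      M_step' C h
    unfold flatF
    by_cases hk : 0 < (k : ℕ)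
    · have hkj : ((pr k : Fin p) : ℕ) < (j : ℕ) := by simp [pr]; omega
      have e2 : markovTransform C j (pr k)
          = regressionStep C ((j:ℕ)-1) * markovTransform C (pr j) (pr k) := M_step' C hkj
      rw [e1, e2]
      simp only [hj0, hk, if_pos, true_and, and_self]
      ring
    · rw [e1]
      simp only [hj0, hk, if_neg, if_pos, not_false_iff, and_false, if_false]
      ring

lemma B_lower {i m : Fin p} (h : i < m) : Bm C i m = 0 := by
  unfold Bm
  simp only [Matrix.of_apply]
  rw [if_neg (fun e => by subst e; exact lt_irrefl _ h), if_neg (by omega)]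

lemma detB : (Bm C).det = 1 := by
  have htri : (Bm C).BlockTriangular OrderDual.toDual := by
    intro i m h
    exact B_lower C h
  rw [Matrix.det_of_lowerTriangular _ htri]
  have : ∀ i : Fin p, Bm C i i = 1 := fun i => by unfold Bm; simp
  simp [this]

lemma detB_unit : IsUnit (Bm C).det := by rw [detB]; exact isUnit_one

lemma detBt_unit : IsUnit ((Bm C)ᵀ).det := by rw [Matrix.det_transpose]; exact detB_unit C

lemma M_fact :
    markovTransform C = (Bm C)⁻¹ * Matrix.diagonal (dEntry C) * ((Bm C)ᵀ)⁻¹ := by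
  rw [← BMB_diag C]
  calc markovTransform C
      = ((Bm C)⁻¹ * Bm C) * markovTransform C * ((Bm C)ᵀ * ((Bm C)ᵀ)⁻¹) := by
        rw [Matrix.nonsing_inv_mul _ (detB_unit C), Matrix.mul_nonsing_inv _ (detBt_unit C),
          Matrix.one_mul, Matrix.mul_one]
    _ = (Bm C)⁻¹ * (Bm C * markovTransform C * (Bm C)ᵀ) * ((Bm C)ᵀ)⁻¹ := by
        simp only [Matrix.mul_assoc]

lemma diag_pos (hpd : C.PosDef) (j : Fin p) : 0 < C j j := by
  have := hpd.dotProduct_mulVec_pos (x := Pi.single j 1) (by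
    intro h
    have := congrFun h j
    simp at this)
  simpa [dotProduct, Matrix.mulVec, Pi.single_apply, Finset.sum_ite_eq] using this

lemma regression_mul (hpd : C.PosDef) {j : Fin p} (hj : 0 < (j : ℕ)) :
    regressionStep C ((j : ℕ) - 1) * C (pr j) (pr j) = C (pr j) j := by
  have hlt : (j : ℕ) - 1 + 1 < p := by omega
  unfold regressionStep
  rw [dif_pos hlt]
  have h1 : (⟨(j : ℕ) - 1, Nat.lt_of_succ_lt hlt⟩ : Fin p) = pr j := by
    apply Fin.ext; simp [pr]
  have h2 : (⟨(j : ℕ) - 1 + 1, hlt⟩ : Fin p) = j := by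
    apply Fin.ext; simp; omega
  rw [h1, h2]
  have hne : C (pr j) (pr j) ≠ 0 := (diag_pos C hpd (pr j)).ne'
  field_simp

lemma dEntry_pos (hpd : C.PosDef) (j : Fin p) : 0 < dEntry C j := by
  unfold dEntry
  by_cases hj : 0 < (j : ℕ)
  · rw [if_pos hj]
    set b := regressionStep C ((j : ℕ) - 1) with hb
    have hprj : pr j ≠ j := by
      intro h
      have := congrArg Fin.val h
      simp [pr] at this
      omega
    set x : Fin p → ℝ := Pi.single j 1 + Pi.single (pr j) (-b) with hx
    have hxne : x ≠ 0 := by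
      intro h
      have := congrFun h j
      simp [hx, Pi.single_apply, hprj] at this
    have hq := hpd.dotProduct_mulVec_pos hxne
    have hsym : C j (pr j) = C (pr j) j := by
      have := congrFun (congrFun hpd.1 j) (pr j)
      simpa using this.symm
    have hform : dotProduct (star x) (C *ᵥ x)
        = C j j - 2 * b * C (pr j) j + b ^ 2 * C (pr j) (pr j) := by
      rw [star_trivial, hx, add_dotProduct, Matrix.mulVec_add,
        Matrix.mulVec_single, Matrix.mulVec_single,
        single_dotProduct, single_dotProduct]
      simp only [Pi.add_apply, Pi.smul_apply, Matrix.col_apply, op_smul_eq_mul]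
      rw [hsym]
      ring
    rw [hform] at hq
    have hmul : b * C (pr j) (pr j) = C (pr j) j := regression_mul C hpd hj
    have hb2 : b ^ 2 * C (pr j) (pr j) = b * C (pr j) j := by
      rw [pow_two, mul_assoc, hmul]
    nlinarith [hq, hb2, hmul]
  · rw [if_neg hj]
    exact diag_pos C hpd j

lemma posdef_conj' {n : Type*} [Fintype n] [DecidableEq n] {A N : Matrix n n ℝ}
    (hA : A.PosDef) (hN : IsUnit N.det) : (Nᴴ * A * N).PosDef := by
  refine Matrix.PosDef.of_dotProduct_mulVec_pos (Matrix.isHermitian_conjTranspose_mul_mul N hA.1) fun x hx => ?_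
  have hinj : Function.Injective N.mulVec :=
    Matrix.mulVec_injective_iff_isUnit.mpr ((Matrix.isUnit_iff_isUnit_det _).2 hN)
  have hNx : N *ᵥ x ≠ 0 := fun h => hx (hinj (by simpa using h))
  simpa only [star_mulVec, dotProduct_mulVec, Matrix.vecMul_vecMul]
    using hA.dotProduct_mulVec_pos hNx

lemma D_posdef (hpd : C.PosDef) : (Matrix.diagonal (dEntry C)).PosDef :=
  Matrix.PosDef.diagonal (dEntry_pos C hpd)

lemma M_posdef (hpd : C.PosDef) : (markovTransform C).PosDef := by
  have hfact := M_fact C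
  have h1 : ((Bm C)ᵀ)⁻¹ = ((Bm C)⁻¹)ᵀ := (Matrix.transpose_nonsing_inv _).symm
  have hinv_unit : IsUnit ((Bm C)⁻¹).det := by
    rw [Matrix.det_nonsing_inv]
    exact isUnit_ringInverse.mpr (detB_unit C)
  have h2 : ((((Bm C)⁻¹)ᵀ)ᴴ * Matrix.diagonal (dEntry C) * ((Bm C)⁻¹)ᵀ).PosDef :=
    posdef_conj' (D_posdef C hpd) (by rw [Matrix.det_transpose]; exact hinv_unit)
  have h3 : (((Bm C)⁻¹)ᵀ)ᴴ = (Bm C)⁻¹ := by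
    ext i k
    simp [Matrix.conjTranspose_apply]
  rw [h3] at h2
  rw [hfact, h1]
  exact h2

lemma M_inv (hpd : C.PosDef) :
    (markovTransform C)⁻¹ = (Bm C)ᵀ * (Matrix.diagonal (dEntry C))⁻¹ * Bm C := by
  have hDunit : IsUnit (Matrix.diagonal (dEntry C)).det := (D_posdef C hpd).det_pos.ne'.isUnit
  apply Matrix.inv_eq_right_inv
  rw [M_fact C]
  simp only [Matrix.mul_assoc]
  rw [← Matrix.mul_assoc ((Bm C)ᵀ)⁻¹, Matrix.nonsing_inv_mul _ (detBt_unit C),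
    Matrix.one_mul, ← Matrix.mul_assoc (Matrix.diagonal (dEntry C)),
    Matrix.mul_nonsing_inv _ hDunit, Matrix.one_mul,
    Matrix.nonsing_inv_mul _ (detB_unit C)]

lemma B_support {i m : Fin p} (h : Bm C i m ≠ 0) :
    (i : ℕ) = (m : ℕ) ∨ (m : ℕ) + 1 = (i : ℕ) := by
  by_contra hcon
  push_neg at hcon
  apply h
  unfold Bm
  simp only [Matrix.of_apply]
  rw [if_neg (fun e => hcon.1 (by rw [e])), if_neg hcon.2]

lemma Minv_tridiag (hpd : C.PosDef) (j k : Fin p) (h : 2 ≤ |(j : ℤ) - (k : ℤ)|) :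
    (markovTransform C)⁻¹ j k = 0 := by
  rw [M_inv C hpd, Matrix.mul_assoc, Matrix.mul_apply]
  refine Finset.sum_eq_zero fun m _ => ?_
  rw [Matrix.transpose_apply]
  by_cases h1 : Bm C m j = 0
  · rw [h1, zero_mul]
  have hDB : ((Matrix.diagonal (dEntry C))⁻¹ * Bm C) m k
      = (Matrix.diagonal (dEntry C))⁻¹ m m * Bm C m k := by
    rw [Matrix.mul_apply]
    refine Finset.sum_eq_single m (fun n _ hn => ?_) (fun hm => absurd (Finset.mem_univ m) hm)
    rw [Matrix.inv_diagonal, Matrix.diagonal_apply_ne _ (Ne.symm hn), zero_mul]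
  rw [hDB]
  by_cases h2 : Bm C m k = 0
  · rw [h2, mul_zero, mul_zero]
  · exfalso
    have hj := B_support C h1
    have hk := B_support C h2
    rcases abs_cases ((j : ℤ) - (k : ℤ)) with ⟨he, _⟩ | ⟨he, _⟩ <;> rw [he] at h <;> omega

lemma C_symm (hpd : C.PosDef) (a b : Fin p) : C a b = C b a := by
  have := congrFun (congrFun hpd.1 a) b
  simpa using this.symm

lemma M_band_succ (hpd : C.PosDef) {k i : Fin p} (h : (k : ℕ) + 1 = (i : ℕ)) :
    markovTransform C k i = C k i := by
  have hk : (k : ℕ) < (i : ℕ) := by omega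
  rw [M_step C hk]
  have hpri : pr i = k := Fin.ext (by simp [pr]; omega)
  rw [hpri, M_diag]
  have hlt : (k : ℕ) + 1 < p := by rw [h]; exact i.isLt
  have hi1 : (i : ℕ) - 1 = (k : ℕ) := by omega
  rw [hi1]
  unfold regressionStep
  rw [dif_pos hlt]
  have e1 : (⟨(k : ℕ), Nat.lt_of_succ_lt hlt⟩ : Fin p) = k := Fin.ext rfl
  have e2 : (⟨(k : ℕ) + 1, hlt⟩ : Fin p) = i := Fin.ext (by simp [h])
  rw [e1, e2]
  rw [mul_comm, div_mul_cancel₀ _ (diag_pos C hpd k).ne']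

lemma M_band (hpd : C.PosDef) (k i : Fin p)
    (h : (k : ℕ) + 1 = (i : ℕ) ∨ (k : ℕ) = (i : ℕ) ∨ (i : ℕ) + 1 = (k : ℕ)) :
    markovTransform C k i = C k i := by
  rcases h with h | h | h
  · exact M_band_succ C hpd h
  · have : k = i := Fin.ext h
    subst this
    exact M_diag C k
  · rw [M_symm, M_band_succ C hpd h, C_symm C hpd]

lemma trace_band (hpd : C.PosDef) (T : Matrix (Fin p) (Fin p) ℝ)
    (hT : ∀ j k : Fin p, 2 ≤ |(j : ℤ) - (k : ℤ)| → T j k = 0) :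
    (T * C).trace = (T * markovTransform C).trace := by
  unfold Matrix.trace
  refine Finset.sum_congr rfl fun i _ => ?_
  simp only [Matrix.diag_apply, Matrix.mul_apply]
  refine Finset.sum_congr rfl fun k _ => ?_
  by_cases hik : 2 ≤ |(i : ℤ) - (k : ℤ)|
  · rw [hT i k hik, zero_mul, zero_mul]
  · have hnear : (k : ℕ) + 1 = (i : ℕ) ∨ (k : ℕ) = (i : ℕ) ∨ (i : ℕ) + 1 = (k : ℕ) := by
      rcases abs_cases ((i : ℤ) - (k : ℤ)) with ⟨he, _⟩ | ⟨he, _⟩ <;> rw [he] at hik <;> omega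
    rw [M_band C hpd k i hnear]


open scoped MatrixOrder in
lemma key_ineq {p : ℕ} {M S : Matrix (Fin p) (Fin p) ℝ}
    (hM : M.PosDef) (hS : S.PosDef) (hne : S ≠ M) :
    (p : ℝ) + Real.log M.det < (S⁻¹ * M).trace + Real.log S.det := by
  classical
  set Q := CFC.sqrt M with hQdef
  have hQps : Q.PosSemidef := (CFC.sqrt_nonneg M).posSemidef
  have hQH : Qᴴ = Q := hQps.1
  have hQQ : Q * Q = M := CFC.sqrt_mul_sqrt_self M hM.posSemidef.nonneg
  have hMdet : 0 < M.det := hM.det_pos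
  have hSdet : 0 < S.det := hS.det_pos
  have hQdet2 : Q.det * Q.det = M.det := by rw [← Matrix.det_mul, hQQ]
  have hQdetne : Q.det ≠ 0 := by
    intro h; rw [h, mul_zero] at hQdet2; exact hMdet.ne' hQdet2.symm
  have hQunit : IsUnit Q.det := hQdetne.isUnit
  set A := Q * S⁻¹ * Q with hAdef
  have hApd : A.PosDef := by
    have := posdef_conj' hS.inv hQunit
    rwa [hQH] at this
  have htrA : A.trace = (S⁻¹ * M).trace := by
    rw [hAdef, Matrix.trace_mul_cycle, hQQ, Matrix.trace_mul_comm]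
  have hdetA : A.det = M.det / S.det := by
    rw [hAdef, Matrix.det_mul, Matrix.det_mul, Matrix.det_nonsing_inv,
      Ring.inverse_eq_inv']
    field_simp
    exact (sq Q.det).trans hQdet2
  have hAne1 : A ≠ 1 := by
    intro h
    apply hne
    have hSinv : S⁻¹ = Q⁻¹ * Q⁻¹ := by
      have h2 : Q⁻¹ * (Q * S⁻¹ * Q) * Q⁻¹ = Q⁻¹ * 1 * Q⁻¹ := by rw [← hAdef, h]
      rw [Matrix.mul_one] at h2
      calc S⁻¹ = (Q⁻¹ * Q) * S⁻¹ * (Q * Q⁻¹) := by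
              rw [Matrix.nonsing_inv_mul _ hQunit, Matrix.mul_nonsing_inv _ hQunit,
                Matrix.one_mul, Matrix.mul_one]
        _ = Q⁻¹ * (Q * S⁻¹ * Q) * Q⁻¹ := by simp only [Matrix.mul_assoc]
        _ = Q⁻¹ * Q⁻¹ := h2
    have hMinv : M⁻¹ = Q⁻¹ * Q⁻¹ := by rw [← hQQ, Matrix.mul_inv_rev]
    have : S⁻¹ = M⁻¹ := by rw [hSinv, hMinv]
    calc S = S⁻¹⁻¹ := (Matrix.nonsing_inv_nonsing_inv _ hSdet.ne'.isUnit).symm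
      _ = M⁻¹⁻¹ := by rw [this]
      _ = M := Matrix.nonsing_inv_nonsing_inv _ hMdet.ne'.isUnit
  -- eigenvalues
  set lev := hApd.1.eigenvalues with hlev
  have hpos : ∀ i, 0 < lev i := hApd.eigenvalues_pos
  have hU1 : (hApd.1.eigenvectorUnitary : Matrix (Fin p) (Fin p) ℝ) *
      star (hApd.1.eigenvectorUnitary : Matrix (Fin p) (Fin p) ℝ) = 1 :=
    (Matrix.mem_unitaryGroup_iff).mp (hApd.1.eigenvectorUnitary).2
  have htr : A.trace = ∑ i, lev i := by
    rw [hApd.1.trace_eq_sum_eigenvalues]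
    simp [hlev]
  have hdet : A.det = ∏ i, lev i := by
    have := hApd.1.det_eq_prod_eigenvalues
    simpa using this
  have hlogdet : Real.log A.det = ∑ i, Real.log (lev i) := by
    rw [hdet]
    exact Real.log_prod (fun i _ => (hpos i).ne')
  have hAone : ∃ i, lev i ≠ 1 := by
    by_contra hcon
    push_neg at hcon
    apply hAne1
    have hdiag : Matrix.diagonal (RCLike.ofReal ∘ lev) = (1 : Matrix (Fin p) (Fin p) ℝ) := by
      rw [show RCLike.ofReal ∘ lev = fun _ => (1:ℝ) from funext fun i => by simp [hcon i]]
      simp [Matrix.diagonal_one]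
    conv_lhs => rw [hApd.1.spectral_theorem]
    rw [hdiag, map_one]
  obtain ⟨i0, hi0⟩ := hAone
  have hsum : (p : ℝ) < ∑ i, (lev i - Real.log (lev i)) := by
    have hcard : (p : ℝ) = ∑ _i : Fin p, (1 : ℝ) := by simp
    rw [hcard]
    refine Finset.sum_lt_sum (fun i _ => ?_) ⟨i0, Finset.mem_univ _, ?_⟩
    · have := Real.log_le_sub_one_of_pos (hpos i); linarith
    · have := Real.log_lt_sub_one_of_pos (hpos i0) hi0; linarith
  have hlogA : Real.log A.det = Real.log M.det - Real.log S.det := by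
    rw [hdetA, Real.log_div hMdet.ne' hSdet.ne']
  rw [← htrA]
  have : A.trace - Real.log A.det = ∑ i, (lev i - Real.log (lev i)) := by
    rw [htr, hlogdet, Finset.sum_sub_distrib]
  linarith [hsum, this, hlogA]

end MarkovProof

/-- **The Markov transform is the information projection onto Markov covariances.**
For a real symmetric positive definite matrix `C`, the Markov transform `M` of `C` belongs to
the class `𝓜` of symmetric positive definite matrices with tridiagonal inverse, and it is the
unique minimizer over `𝓜` of `Σ ↦ trace(Σ⁻¹ C) + log det Σ`, which equals (up to an additive
constant depending only on `C` and `p`) twice the KL divergence `KL(N(0,C), N(0,Σ))`. -/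
theorem markovTransform_unique_KL_minimizer
    (p : ℕ) (hp : 1 ≤ p) (C : Matrix (Fin p) (Fin p) ℝ) (hpd : C.PosDef) :
    markovTransform C ∈
        {S : Matrix (Fin p) (Fin p) ℝ | S.PosDef ∧
          ∀ j k : Fin p, 2 ≤ |(j : ℤ) - (k : ℤ)| → S⁻¹ j k = 0} ∧
      ∀ S : Matrix (Fin p) (Fin p) ℝ,
        S ∈ {S : Matrix (Fin p) (Fin p) ℝ | S.PosDef ∧
              ∀ j k : Fin p, 2 ≤ |(j : ℤ) - (k : ℤ)| → S⁻¹ j k = 0} →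
        S ≠ markovTransform C →
          ((markovTransform C)⁻¹ * C).trace + Real.log (markovTransform C).det <
            (S⁻¹ * C).trace + Real.log S.det := by
  have hMpd := MarkovProof.M_posdef C hpd
  have hMtri := MarkovProof.Minv_tridiag C hpd
  refine ⟨⟨hMpd, hMtri⟩, ?_⟩
  intro S hS hne
  obtain ⟨hSpd, hStri⟩ := hS
  rw [MarkovProof.trace_band C hpd _ hMtri, MarkovProof.trace_band C hpd _ hStri,
    Matrix.nonsing_inv_mul _ hMpd.det_pos.ne'.isUnit, Matrix.trace_one]
  have hcard : ((Fintype.card (Fin p) : ℝ)) = (p : ℝ) := by simp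
  rw [hcard]
  exact MarkovProof.key_ineq hMpd hSpd hne
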